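/- Let E be a real or complex Banach lattice and let y ∈ E with y ≥ 0. Then the following assertions are equivalent: (i) y is a quasi-interior point of the positive cone E₊; (ii) for every x ∈ E with x ≥ 0 one has ‖(y − sx)⁻‖ = o(s) as s ↓ 0. -/
import Mathlib


open Filter Topology Asymptotics

noncomputable section

/-- A complex Banach lattice, axiomatized via its order (given by the positive cone),
its modulus map `cabs` and its canonical conjugation `conj`. -/
class ComplexBanachLattice (E : Type*) extends
    NormedAddCommGroup E, NormedSpace ℂ E, CompleteSpace E, PartialOrder E where
  /-- the modulus map `z ↦ |z|` -/
  cabs : E → E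
  /-- the canonical conjugation of the complex Banach lattice -/
  conj : E → E
  add_le_add_left' : ∀ a b : E, a ≤ b → ∀ c : E, c + a ≤ c + b
  smul_nonneg' : ∀ (r : ℝ) (x : E), 0 ≤ r → 0 ≤ x → 0 ≤ (r : ℂ) • x
  isClosed_nonneg : IsClosed {x : E | 0 ≤ x}
  cabs_nonneg : ∀ x : E, 0 ≤ cabs x
  cabs_of_nonneg : ∀ x : E, 0 ≤ x → cabs x = x
  cabs_eq_zero_iff : ∀ x : E, cabs x = 0 ↔ x = 0
  cabs_smul : ∀ (c : ℂ) (x : E), cabs (c • x) = (‖c‖ : ℂ) • cabs x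
  cabs_add_le : ∀ x y : E, cabs (x + y) ≤ cabs x + cabs y
  norm_cabs : ∀ x : E, ‖cabs x‖ = ‖x‖
  norm_mono : ∀ x y : E, cabs x ≤ cabs y → ‖x‖ ≤ ‖y‖
  conj_add : ∀ x y : E, conj (x + y) = conj x + conj y
  conj_smul : ∀ (c : ℂ) (x : E), conj (c • x) = (starRingEnd ℂ c) • conj x
  conj_conj : ∀ x : E, conj (conj x) = x
  conj_of_nonneg : ∀ x : E, 0 ≤ x → conj x = x
  cabs_conj : ∀ x : E, cabs (conj x) = cabs x
  cabs_isLUB : ∀ x : E, conj x = x → IsLUB {x, -x} (cabs x)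
  exists_lub : ∀ x y : E, conj x = x → conj y = y → ∃ z : E, IsLUB {x, y} z

open ComplexBanachLattice

/-- A bounded linear operator on a complex Banach lattice is positive
if it maps positive elements to positive elements. -/
def IsPosOp {E : Type*} [ComplexBanachLattice E] (T : E →L[ℂ] E) : Prop :=
  ∀ x : E, 0 ≤ x → 0 ≤ T x

/-- The negative part `u⁻ = (|u| - u)/2` of a (real) element `u`. -/
def negPart {E : Type*} [ComplexBanachLattice E] (u : E) : E :=
  ((2⁻¹ : ℝ) : ℂ) • (cabs u - u)

namespace CBLAux

variable {E : Type*} [ComplexBanachLattice E]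

lemma le_iff_sub {a b : E} : a ≤ b ↔ 0 ≤ b - a := by
  constructor
  · intro h
    have := add_le_add_left' a b h (-a)
    simpa [sub_eq_add_neg, add_comm] using this
  · intro h
    have := add_le_add_left' 0 (b - a) h a
    simpa using this

lemma add_le_add'' {a b c d : E} (h1 : a ≤ b) (h2 : c ≤ d) : a + c ≤ b + d := by
  have t1 := add_le_add_left' c d h2 a
  have t2 := add_le_add_left' a b h1 d
  calc a + c ≤ a + d := t1
    _ = d + a := add_comm _ _
    _ ≤ d + b := t2
    _ = b + d := add_comm _ _

lemma add_nonneg'' {a b : E} (ha : 0 ≤ a) (hb : 0 ≤ b) : 0 ≤ a + b := by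
  simpa using add_le_add'' ha hb

lemma rsmul_le_rsmul {r : ℝ} (hr : 0 ≤ r) {a b : E} (h : a ≤ b) :
    (r : ℂ) • a ≤ (r : ℂ) • b := by
  rw [le_iff_sub] at h ⊢
  have := smul_nonneg' r (b - a) hr h
  simpa [smul_sub] using this

lemma conj_zero : conj (0 : E) = 0 := by
  have := conj_smul (0 : ℂ) (0 : E)
  simpa using this

lemma conj_neg (a : E) : conj (-a) = -conj a := by
  have := conj_smul (-1 : ℂ) a
  simpa using this

lemma conj_sub (a b : E) : conj (a - b) = conj a - conj b := by
  rw [sub_eq_add_neg, conj_add, conj_neg, sub_eq_add_neg]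

lemma conj_rsmul (r : ℝ) (a : E) : conj ((r : ℂ) • a) = (r : ℂ) • conj a := by
  rw [conj_smul, Complex.conj_ofReal]

lemma le_cabs {u : E} (hu : conj u = u) : u ≤ cabs u :=
  (cabs_isLUB u hu).1 (Set.mem_insert _ _)

lemma neg_le_cabs {u : E} (hu : conj u = u) : -u ≤ cabs u :=
  (cabs_isLUB u hu).1 (Set.mem_insert_of_mem _ rfl)

/-- positive part -/
def posPart (u : E) : E := ((2⁻¹ : ℝ) : ℂ) • (cabs u + u)

lemma half_add_self (v : E) : ((2⁻¹ : ℝ) : ℂ) • (v + v) = v := by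
  rw [smul_add, ← add_smul]
  norm_num

lemma le_posPart {u : E} (hu : conj u = u) : u ≤ posPart u := by
  have h1 : u + u ≤ cabs u + u := add_le_add'' (le_cabs hu) le_rfl
  have := rsmul_le_rsmul (by norm_num : (0:ℝ) ≤ 2⁻¹) h1
  rwa [half_add_self] at this

lemma posPart_nonneg {u : E} (hu : conj u = u) : 0 ≤ posPart u := by
  have h1 : (0:E) ≤ cabs u + u := by
    have := add_le_add'' (neg_le_cabs hu) (le_refl u)
    simpa using this
  have := smul_nonneg' 2⁻¹ _ (by norm_num) h1
  exact this

lemma negPart_nonneg {u : E} (hu : conj u = u) : 0 ≤ negPart u := by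
  have h1 : (0:E) ≤ cabs u - u := by rw [← le_iff_sub]; exact le_cabs hu
  exact smul_nonneg' 2⁻¹ _ (by norm_num) h1

lemma posPart_sub_negPart (u : E) : posPart u - negPart u = u := by
  rw [posPart, _root_.negPart, ← smul_sub]
  have : cabs u + u - (cabs u - u) = u + u := by abel
  rw [this, half_add_self]

lemma posPart_le {u v : E} (hu : conj u = u) (huv : u ≤ v) (hv : 0 ≤ v) :
    posPart u ≤ v := by
  have hub : cabs u ≤ v + v - u := by
    refine (cabs_isLUB u hu).2 ?_
    rintro z hz
    simp only [Set.mem_insert_iff, Set.mem_singleton_iff] at hz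
    rcases hz with h | h <;> rw [h]
    · rw [le_iff_sub]
      have : v + v - u - u = (v - u) + (v - u) := by abel
      rw [this]
      exact add_nonneg'' (le_iff_sub.mp huv) (le_iff_sub.mp huv)
    · rw [le_iff_sub]
      have : v + v - u - -u = v + v := by abel
      rw [this]
      exact add_nonneg'' hv hv
  have h2 : cabs u + u ≤ v + v := by
    have := add_le_add'' hub (le_refl u)
    simpa using this
  have := rsmul_le_rsmul (by norm_num : (0:ℝ) ≤ 2⁻¹) h2
  rwa [half_add_self] at this

lemma norm_le_norm_of_le {a b : E} (ha : 0 ≤ a) (hab : a ≤ b) : ‖a‖ ≤ ‖b‖ := by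
  have hb : 0 ≤ b := le_trans ha hab
  exact norm_mono a b (by rw [cabs_of_nonneg a ha, cabs_of_nonneg b hb]; exact hab)

lemma cabs_neg (a : E) : cabs (-a) = cabs a := by
  have := cabs_smul (-1 : ℂ) a
  simpa using this

end CBLAux

namespace CBLAux
variable {E : Type*} [ComplexBanachLattice E]

lemma posPart_eq {s : ℝ} (hs : 0 < s) (x y : E) :
    posPart (x - ((s⁻¹ : ℝ) : ℂ) • y) = ((s⁻¹ : ℝ) : ℂ) • _root_.negPart (y - (s : ℂ) • x) := by
  have hts : ((s⁻¹ : ℝ) : ℂ) * ((s : ℝ) : ℂ) = 1 := by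
    norm_cast
    field_simp
  have h1 : x - ((s⁻¹ : ℝ) : ℂ) • y = ((s⁻¹ : ℝ) : ℂ) • (-(y - (s : ℂ) • x)) := by
    rw [smul_neg, smul_sub, smul_smul, hts, one_smul, neg_sub]
  rw [posPart, _root_.negPart, h1, cabs_smul, cabs_neg]
  have hnorm : ‖((s⁻¹ : ℝ) : ℂ)‖ = (s⁻¹ : ℝ) := by
    rw [Complex.norm_real, Real.norm_eq_abs, abs_of_pos (by positivity)]
  rw [hnorm]
  module

/-- The principal ideal as a submodule. -/
def idealSub (y : E) (hy : 0 ≤ y) : Submodule ℂ E where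
  carrier := {z : E | ∃ c : ℝ, 0 < c ∧ cabs z ≤ (c : ℂ) • y}
  zero_mem' := by
    refine ⟨1, one_pos, ?_⟩
    rw [(cabs_eq_zero_iff (0 : E)).mpr rfl]
    have := smul_nonneg' 1 y zero_le_one hy
    exact this
  add_mem' := by
    rintro a b ⟨c1, hc1, h1⟩ ⟨c2, hc2, h2⟩
    refine ⟨c1 + c2, by positivity, ?_⟩
    have := add_le_add'' h1 h2
    refine le_trans (cabs_add_le a b) (le_trans this (le_of_eq ?_))
    push_cast
    rw [add_smul]
  smul_mem' := by
    rintro c a ⟨c1, hc1, h1⟩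
    refine ⟨‖c‖ * c1 + 1, by positivity, ?_⟩
    rw [cabs_smul]
    have h2 : (‖c‖ : ℂ) • cabs a ≤ (‖c‖ : ℂ) • ((c1 : ℂ) • y) :=
      rsmul_le_rsmul (norm_nonneg c) h1
    refine le_trans h2 ?_
    rw [smul_smul]
    have hcast : (‖c‖ : ℂ) * (c1 : ℂ) = ((‖c‖ * c1 : ℝ) : ℂ) := by push_cast; ring
    rw [hcast, le_iff_sub]
    have : ((‖c‖ * c1 + 1 : ℝ) : ℂ) • y - ((‖c‖ * c1 : ℝ) : ℂ) • y = y := by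
      rw [← sub_smul]
      norm_num
    rw [this]
    exact hy

end CBLAux

open CBLAux

/-- Corollary 4.7: for `y ≥ 0` in a Banach lattice, `y` is a quasi-interior point of the
positive cone (i.e. the principal ideal `E_y` is dense) if and only if for every `x ≥ 0`
one has `‖(y - sx)⁻‖ = o(s)` as `s ↓ 0`. -/
theorem quasi_interior_point_iff
    {E : Type*} [ComplexBanachLattice E] (y : E) (hy : 0 ≤ y) :
    Dense {z : E | ∃ c : ℝ, 0 < c ∧ cabs z ≤ (c : ℂ) • y} ↔
    (∀ x : E, 0 ≤ x →
      (fun s : ℝ => ‖negPart (y - (s : ℂ) • x)‖) =o[𝓝[>] (0 : ℝ)] (fun s : ℝ => s)) := by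
  set S : Set E := {z : E | ∃ c : ℝ, 0 < c ∧ cabs z ≤ (c : ℂ) • y} with hSdef
  have hrealgen : ∀ x : E, 0 ≤ x → ∀ r : ℝ, conj (x - (r : ℂ) • y) = x - (r : ℂ) • y := by
    intro x hx r
    rw [conj_sub, conj_rsmul, conj_of_nonneg x hx, conj_of_nonneg y hy]
  constructor
  · -- density → little-o
    intro hdense x hx
    have hreal := hrealgen x hx
    rw [isLittleO_iff]
    intro ε hε
    obtain ⟨z, hzS, hdist⟩ := Metric.mem_closure_iff.mp (hdense x) ε hε
    obtain ⟨c, hc, hzc⟩ := hzS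
    -- the key bound at scale c
    have hkey : x - (c : ℂ) • y ≤ cabs (x - z) := by
      have h0 : z + (x - z) = x := by abel
      have h1 : x ≤ cabs z + cabs (x - z) := by
        calc x = cabs x := (cabs_of_nonneg x hx).symm
          _ = cabs (z + (x - z)) := by rw [h0]
          _ ≤ cabs z + cabs (x - z) := cabs_add_le _ _
      have h2 : x ≤ (c : ℂ) • y + cabs (x - z) := le_trans h1 (add_le_add'' hzc le_rfl)
      have h3 := le_iff_sub.mp h2
      rw [le_iff_sub]
      have e : (c : ℂ) • y + cabs (x - z) - x = cabs (x - z) - (x - (c : ℂ) • y) := by abel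
      rwa [e] at h3
    have hppc : posPart (x - (c : ℂ) • y) ≤ cabs (x - z) :=
      posPart_le (hreal c) hkey (cabs_nonneg _)
    have hppn : 0 ≤ posPart (x - (c : ℂ) • y) := posPart_nonneg (hreal c)
    have hnorm1 : ‖posPart (x - (c : ℂ) • y)‖ < ε := by
      have h4 := norm_le_norm_of_le hppn hppc
      rw [norm_cabs] at h4
      calc ‖posPart (x - (c : ℂ) • y)‖ ≤ ‖x - z‖ := h4
        _ = dist x z := (dist_eq_norm x z).symm
        _ < ε := hdist
    filter_upwards [Ioo_mem_nhdsGT_of_mem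
      (Set.left_mem_Ico.mpr (by positivity : (0:ℝ) < c⁻¹))] with s hs
    obtain ⟨hs0, hsc⟩ := hs
    have ht : c ≤ s⁻¹ := by
      rw [← inv_inv c]
      exact le_of_lt ((inv_lt_inv₀ (by positivity) hs0).mpr hsc)
    have hmono : x - ((s⁻¹ : ℝ) : ℂ) • y ≤ x - (c : ℂ) • y := by
      rw [le_iff_sub]
      have e : (x - (c : ℂ) • y) - (x - ((s⁻¹ : ℝ) : ℂ) • y)
          = ((s⁻¹ - c : ℝ) : ℂ) • y := by
        push_cast
        rw [sub_smul]
        abel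
      rw [e]
      exact smul_nonneg' _ _ (by linarith) hy
    have hple : posPart (x - ((s⁻¹ : ℝ) : ℂ) • y) ≤ posPart (x - (c : ℂ) • y) :=
      posPart_le (hreal s⁻¹) (le_trans hmono (le_posPart (hreal c))) hppn
    have hnorms : ‖posPart (x - ((s⁻¹ : ℝ) : ℂ) • y)‖ ≤ ‖posPart (x - (c : ℂ) • y)‖ :=
      norm_le_norm_of_le (posPart_nonneg (hreal s⁻¹)) hple
    have hid := posPart_eq hs0 x y
    have hnormfact : ‖((s⁻¹ : ℝ) : ℂ)‖ = s⁻¹ := by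
      rw [Complex.norm_real, Real.norm_eq_abs, abs_of_pos (by positivity)]
    have hval : ‖posPart (x - ((s⁻¹ : ℝ) : ℂ) • y)‖ = s⁻¹ * ‖negPart (y - (s : ℂ) • x)‖ := by
      rw [hid, norm_smul, hnormfact]
    have hfin : s⁻¹ * ‖negPart (y - (s : ℂ) • x)‖ ≤ ‖posPart (x - (c : ℂ) • y)‖ := by
      rw [← hval]; exact hnorms
    have : ‖negPart (y - (s : ℂ) • x)‖ ≤ s * ‖posPart (x - (c : ℂ) • y)‖ := by
      have h5 := mul_le_mul_of_nonneg_left hfin (le_of_lt hs0)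
      rwa [← mul_assoc, mul_inv_cancel₀ (ne_of_gt hs0), one_mul] at h5
    rw [Real.norm_eq_abs, Real.norm_eq_abs, abs_of_nonneg (norm_nonneg _), abs_of_pos hs0]
    nlinarith [norm_nonneg (negPart (y - (s : ℂ) • x))]
  · -- little-o → density
    intro hsmall
    set V : Submodule ℂ E := idealSub y hy with hV
    set W := V.topologicalClosure with hW
    have hpos : ∀ x : E, 0 ≤ x → x ∈ W := by
      intro x hx
      have hreal := hrealgen x hx
      rw [← SetLike.mem_coe, Submodule.topologicalClosure_coe]
      rw [Metric.mem_closure_iff]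
      intro ε hε
      have hx' := hsmall x hx
      rw [isLittleO_iff] at hx'
      obtain ⟨s, hbound, hs0⟩ := ((hx' (half_pos hε)).and self_mem_nhdsWithin).exists
      set t : ℝ := s⁻¹ with htdef
      have ht0 : 0 < t := by positivity
      refine ⟨x - posPart (x - (t : ℂ) • y), ⟨t, ht0, ?_⟩, ?_⟩
      · -- membership in the ideal
        have hz1 : x - (t : ℂ) • y ≤ x := by
          rw [le_iff_sub]
          have e : x - (x - (t : ℂ) • y) = (t : ℂ) • y := by abel
          rw [e]
          exact smul_nonneg' _ _ (le_of_lt ht0) hy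
        have hz2 : posPart (x - (t : ℂ) • y) ≤ x := posPart_le (hreal t) hz1 hx
        have hznn : 0 ≤ x - posPart (x - (t : ℂ) • y) := le_iff_sub.mp hz2
        rw [cabs_of_nonneg _ hznn, le_iff_sub]
        have h6 := le_iff_sub.mp (le_posPart (hreal t))
        have e : (t : ℂ) • y - (x - posPart (x - (t : ℂ) • y))
            = posPart (x - (t : ℂ) • y) - (x - (t : ℂ) • y) := by abel
        rwa [e]
      · -- distance estimate
        have e : x - (x - posPart (x - (t : ℂ) • y)) = posPart (x - (t : ℂ) • y) := by abel
        rw [dist_eq_norm, e]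
        have hid := posPart_eq hs0 x y
        have hnormfact : ‖((s⁻¹ : ℝ) : ℂ)‖ = s⁻¹ := by
          rw [Complex.norm_real, Real.norm_eq_abs, abs_of_pos (by positivity)]
        rw [htdef, hid, norm_smul, hnormfact]
        rw [Real.norm_eq_abs, Real.norm_eq_abs, abs_of_nonneg (norm_nonneg _),
          abs_of_pos hs0] at hbound
        calc s⁻¹ * ‖negPart (y - (s : ℂ) • x)‖ ≤ s⁻¹ * (ε / 2 * s) := by
              exact mul_le_mul_of_nonneg_left hbound (by positivity)
          _ = ε / 2 := by field_simp
          _ < ε := by linarith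
    have hreals : ∀ u : E, conj u = u → u ∈ W := by
      intro u hu
      have h7 := W.sub_mem (hpos _ (posPart_nonneg hu)) (hpos _ (negPart_nonneg hu))
      rwa [CBLAux.posPart_sub_negPart] at h7
    have hall : ∀ a : E, a ∈ W := by
      intro a
      have hu : conj (((2⁻¹ : ℝ) : ℂ) • (a + conj a)) = ((2⁻¹ : ℝ) : ℂ) • (a + conj a) := by
        rw [conj_smul, Complex.conj_ofReal, conj_add, conj_conj, add_comm (conj a) a]
      have hw : conj ((-Complex.I * ((2⁻¹ : ℝ) : ℂ)) • (a - conj a))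
          = (-Complex.I * ((2⁻¹ : ℝ) : ℂ)) • (a - conj a) := by
        rw [conj_smul, conj_sub, conj_conj]
        rw [show (starRingEnd ℂ) (-Complex.I * ((2⁻¹ : ℝ) : ℂ))
            = Complex.I * ((2⁻¹ : ℝ) : ℂ) by
          rw [map_mul, map_neg, Complex.conj_I, Complex.conj_ofReal]; ring]
        rw [show conj a - a = -(a - conj a) by abel, smul_neg, ← neg_smul]
        congr 1
        ring
      have hdecomp : a = ((2⁻¹ : ℝ) : ℂ) • (a + conj a)
          + Complex.I • ((-Complex.I * ((2⁻¹ : ℝ) : ℂ)) • (a - conj a)) := by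
        rw [smul_smul]
        rw [show Complex.I * (-Complex.I * ((2⁻¹ : ℝ) : ℂ)) = ((2⁻¹ : ℝ) : ℂ) by
          rw [show Complex.I * (-Complex.I * ((2⁻¹ : ℝ) : ℂ))
              = -(Complex.I * Complex.I) * ((2⁻¹ : ℝ) : ℂ) from by ring, Complex.I_mul_I]
          ring]
        push_cast
        module
      rw [hdecomp]
      exact W.add_mem (hreals _ hu) (W.smul_mem Complex.I (hreals _ hw))
    intro z
    have h8 := hall z
    rw [← SetLike.mem_coe, Submodule.topologicalClosure_coe] at h8
    exact h8
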